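/- arXiv:2302.00949 — 4 statements merged into one kernel-verified Lean document; each statement's English description precedes it below -/
import Mathlib

section
/- Let c, α₁ be real constants with c ≠ 0 and let C : ℝ → ℝ be differentiable with C(t) ≠ 0 for all t. On ℝ⁴ with coordinates (t,x,y,z), define the Bianchi I metric g = diag(−C(t)², C(t)²e^{−2t/c}, C(t)²e^{−2α₁t/c}, C(t)²). Then the vector field X₁ = (c, x, α₁y, 0) (i.e. X₁ = c∂_t + x∂_x + α₁y∂_y) is a conformal Killing vector of g with conformal factor ψ(t,x,y,z) = c·C′(t)/C(t): for all μ,ν ∈ {0,1,2,3} and all points p, Σ_λ [ξ^λ(p)·∂_λ g_{μν}(p) + g_{λν}(p)·∂_μ ξ^λ(p) + g_{μλ}(p)·∂_ν ξ^λ(p)] = 2ψ(p)·g_{μν}(p). -/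
noncomputable section

/-- Partial derivative of `f` in the `μ`-th coordinate direction at `p`. -/
def pd (μ : Fin 4) (f : (Fin 4 → ℝ) → ℝ) (p : Fin 4 → ℝ) : ℝ :=
  fderiv ℝ f p (Pi.single μ 1)

/-- `ξ` is a conformal Killing vector of the metric `g` with conformal factor `ψ`:
`Σ_λ [ξ^λ ∂_λ g_{μν} + g_{λν} ∂_μ ξ^λ + g_{μλ} ∂_ν ξ^λ] = 2 ψ g_{μν}`. -/
def IsCKV (g : (Fin 4 → ℝ) → Matrix (Fin 4) (Fin 4) ℝ)
    (ξ : (Fin 4 → ℝ) → Fin 4 → ℝ) (ψ : (Fin 4 → ℝ) → ℝ) : Prop :=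
  ∀ (μ ν : Fin 4) (p : Fin 4 → ℝ),
    (∑ l : Fin 4, (ξ p l * pd l (fun q => g q μ ν) p
      + g p l ν * pd μ (fun q => ξ q l) p
      + g p μ l * pd ν (fun q => ξ q l) p)) = 2 * ψ p * g p μ ν


lemma pd_const (l : Fin 4) (a : ℝ) (p : Fin 4 → ℝ) : pd l (fun _ => a) p = 0 := by
  simp [pd]

lemma pd_eval (l i : Fin 4) (p : Fin 4 → ℝ) :
    pd l (fun q => q i) p = if i = l then 1 else 0 := by
  have h : (fun q : Fin 4 → ℝ => q i)
      = ⇑(ContinuousLinearMap.proj (R := ℝ) (φ := fun _ : Fin 4 => ℝ) i) := rfl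
  rw [pd, h, ContinuousLinearMap.fderiv]
  simp [Pi.single_apply]

lemma pd_smul_eval (l i : Fin 4) (a : ℝ) (p : Fin 4 → ℝ) :
    pd l (fun q => a * q i) p = if i = l then a else 0 := by
  have h : (fun q : Fin 4 → ℝ => a * q i)
      = ⇑(a • ContinuousLinearMap.proj (R := ℝ) (φ := fun _ : Fin 4 => ℝ) i) := rfl
  rw [pd, h, ContinuousLinearMap.fderiv]
  simp [Pi.single_apply, mul_ite]

lemma pd_comp0 (F : ℝ → ℝ) (hF : Differentiable ℝ F) (l : Fin 4) (p : Fin 4 → ℝ) :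
    pd l (fun q => F (q 0)) p = if (0 : Fin 4) = l then deriv F (p 0) else 0 := by
  have hproj : HasFDerivAt (fun q : Fin 4 → ℝ => q 0)
      (ContinuousLinearMap.proj (R := ℝ) (φ := fun _ : Fin 4 => ℝ) 0) p :=
    (ContinuousLinearMap.proj (R := ℝ) (φ := fun _ : Fin 4 => ℝ) 0).hasFDerivAt
  have h1 : HasFDerivAt (fun q : Fin 4 → ℝ => F (q 0))
      (((ContinuousLinearMap.smulRight (1 : ℝ →L[ℝ] ℝ) (deriv F (p 0)))).comp
        (ContinuousLinearMap.proj (R := ℝ) (φ := fun _ : Fin 4 => ℝ) 0)) p :=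
    ((hF (p 0)).hasDerivAt.hasFDerivAt).comp p hproj
  rw [pd, h1.fderiv]
  simp [Pi.single_apply, eq_comm]

/-- the vector field `X₁ = c∂_t + x∂_x + α₁ y∂_y` is a conformal Killing
vector of the Bianchi I metric `diag(−C², C²e^{−2t/c}, C²e^{−2α₁t/c}, C²)` with conformal
factor `ψ = c C′(t)/C(t)`. -/
theorem bianchiI_X1_is_CKV (c α₁ : ℝ) (hc : c ≠ 0)
    (C : ℝ → ℝ) (hC : Differentiable ℝ C) (hC0 : ∀ t, C t ≠ 0)
    (g : (Fin 4 → ℝ) → Matrix (Fin 4) (Fin 4) ℝ)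
    (hg : g = fun p => Matrix.diagonal
      ![-(C (p 0)) ^ 2,
        (C (p 0)) ^ 2 * Real.exp (-2 * p 0 / c),
        (C (p 0)) ^ 2 * Real.exp (-2 * α₁ * p 0 / c),
        (C (p 0)) ^ 2])
    (ξ : (Fin 4 → ℝ) → Fin 4 → ℝ)
    (hξ : ξ = fun p => ![c, p 1, α₁ * p 2, 0])
    (ψ : (Fin 4 → ℝ) → ℝ)
    (hψ : ψ = fun p => c * deriv C (p 0) / C (p 0)) :
    IsCKV g ξ ψ := by
  subst hg hξ hψ
  -- derivative facts
  have hexp : ∀ a : ℝ, Differentiable ℝ (fun s : ℝ => Real.exp (a * s / c)) := by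
    intro a
    exact (((differentiable_id.const_mul a).div_const c)).exp
  have hexp' : ∀ (a t : ℝ), deriv (fun s : ℝ => Real.exp (a * s / c)) t
      = Real.exp (a * t / c) * (a / c) := by
    intro a t
    have h : HasDerivAt (fun s : ℝ => a * s / c) (a / c) t := by
      simpa using ((hasDerivAt_id t).const_mul a).div_const c
    simpa using h.exp.deriv
  have hC2 : Differentiable ℝ (fun s : ℝ => (C s) ^ 2) := hC.pow 2
  have hC2' : ∀ t, deriv (fun s : ℝ => (C s) ^ 2) t = 2 * C t * deriv C t := by
    intro t
    have := ((hC t).hasDerivAt.fun_pow 2).deriv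
    simpa using this
  -- component derivative lemmas
  have hF0 : Differentiable ℝ (fun s : ℝ => -(C s) ^ 2) := hC2.neg
  have hF0' : ∀ t, deriv (fun s : ℝ => -(C s) ^ 2) t = -(2 * C t * deriv C t) := by
    intro t
    rw [deriv.fun_neg, hC2' t]
  have hF1 : Differentiable ℝ (fun s : ℝ => (C s) ^ 2 * Real.exp (-2 * s / c)) :=
    hC2.mul (hexp (-2))
  have hF1' : ∀ t, deriv (fun s : ℝ => (C s) ^ 2 * Real.exp (-2 * s / c)) t
      = 2 * C t * deriv C t * Real.exp (-2 * t / c)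
        + (C t) ^ 2 * (Real.exp (-2 * t / c) * (-2 / c)) := by
    intro t
    rw [deriv_fun_mul (hC2 t) (hexp (-2) t), hC2' t, hexp' (-2) t]
  have hF2 : Differentiable ℝ (fun s : ℝ => (C s) ^ 2 * Real.exp (-2 * α₁ * s / c)) :=
    hC2.mul (hexp (-2 * α₁))
  have hF2' : ∀ t, deriv (fun s : ℝ => (C s) ^ 2 * Real.exp (-2 * α₁ * s / c)) t
      = 2 * C t * deriv C t * Real.exp (-2 * α₁ * t / c)
        + (C t) ^ 2 * (Real.exp (-2 * α₁ * t / c) * (-2 * α₁ / c)) := by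
    intro t
    rw [deriv_fun_mul (hC2 t) (hexp (-2 * α₁) t), hC2' t, hexp' (-2 * α₁) t]
  intro μ ν p
  have e0 := pd_comp0 (fun s => -(C s) ^ 2) hF0
  have e1 := pd_comp0 (fun s => (C s) ^ 2 * Real.exp (-2 * s / c)) hF1
  have e2 := pd_comp0 (fun s => (C s) ^ 2 * Real.exp (-2 * α₁ * s / c)) hF2
  have e3 := pd_comp0 (fun s => (C s) ^ 2) hC2
  fin_cases μ <;> fin_cases ν <;>
    simp only [Fin.sum_univ_four, Matrix.diagonal_apply, Fin.isValue, Fin.mk_zero, Fin.mk_one,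
      Fin.reduceFinMk, Fin.reduceEq, reduceIte,
      Matrix.cons_val_zero, Matrix.cons_val_one, Matrix.head_cons,
      Matrix.cons_val_two, Matrix.tail_cons, Matrix.cons_val_three,
      Matrix.cons_val', Matrix.empty_val', Matrix.cons_val_fin_one, Matrix.head_fin_const] <;>
    simp only [e0, e1, e2, e3, pd_const, pd_eval, pd_smul_eval, hF0', hF1', hF2', hC2',
      Fin.reduceEq, reduceIte] <;>
    field_simp [hC0 (p 0)] <;>
    ring
end
end

section
/- Let c, α₁ be real constants with c ≠ 0, let C : ℝ → ℝ be three times differentiable with C(t) ≠ 0 for all t, and let U : ℝ³ → ℝ be differentiable. On ℝ⁴ with coordinates (t,x,y,z), consider the Bianchi I metric diag(−C², C²e^{−2t/c}, C²e^{−2α₁t/c}, C²), the conformal Killing vector ξ = (c, x, α₁y, 0) with conformal factor ψ(t) = c·C′(t)/C(t), and the potential V(t,x,y,z) = (c·C″(t) − (α₁+1)·C′(t))/(c·C(t)³) + C(t)^{−2}·U(x·e^{−t/c}, y·e^{−α₁t/c}, z). Then the Lie/Noether symmetry constraint of the Klein–Gordon equation holds identically: for all (t,x,y,z), c·∂_tV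 + x·∂_xV + α₁y·∂_yV + 2ψ·V + Δψ = 0, where Δψ(t) = −C(t)^{−2}·[ψ″(t) + (2C′(t)/C(t) − (1+α₁)/c)·ψ′(t)] is the Laplace–Beltrami operator of the metric applied to ψ. -/
noncomputable section

set_option maxHeartbeats 2000000 in
/-- for the Bianchi I metric `diag(−C², C²e^{−2t/c}, C²e^{−2α₁t/c}, C²)`,
the CKV `ξ = c∂_t + x∂_x + α₁y∂_y` with conformal factor `ψ = cC′/C` and the potential
`V = (cC″ − (α₁+1)C′)/(cC³) + C^{−2}·U(xe^{−t/c}, ye^{−α₁t/c}, z)`, the Lie/Noether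
symmetry constraint `ξ^ν ∂_ν V + 2ψV + Δψ = 0` of the Klein-Gordon equation holds. -/
theorem bianchiI_X1_potential_constraint (c α₁ : ℝ) (hc : c ≠ 0)
    (C : ℝ → ℝ) (hC : ContDiff ℝ 3 C) (hC0 : ∀ t, C t ≠ 0)
    (U : (Fin 3 → ℝ) → ℝ) (hU : Differentiable ℝ U)
    (ψ : ℝ → ℝ) (hψ : ψ = fun t => c * deriv C t / C t)
    (Δψ : ℝ → ℝ)
    (hΔψ : Δψ = fun t => -((C t) ^ 2)⁻¹ *
      (deriv (deriv ψ) t + (2 * deriv C t / C t - (1 + α₁) / c) * deriv ψ t))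
    (V : (Fin 4 → ℝ) → ℝ)
    (hV : V = fun p =>
      (c * deriv (deriv C) (p 0) - (α₁ + 1) * deriv C (p 0)) / (c * (C (p 0)) ^ 3)
      + ((C (p 0)) ^ 2)⁻¹ *
          U ![p 1 * Real.exp (-(p 0) / c), p 2 * Real.exp (-(α₁ * p 0) / c), p 3]) :
    ∀ p : Fin 4 → ℝ,
      c * pd 0 V p + p 1 * pd 1 V p + α₁ * p 2 * pd 2 V p
        + 2 * ψ (p 0) * V p + Δψ (p 0) = 0 := by
  -- differentiability of C and its derivatives
  have hC2' : ContDiff ℝ 2 (deriv C) := by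
    have h3 : ContDiff ℝ ((2:ℕ) + 1) C := by norm_num; exact_mod_cast hC
    exact (contDiff_succ_iff_deriv.mp h3).2.2
  have hC1' : ContDiff ℝ 1 (deriv (deriv C)) := by
    have h2 : ContDiff ℝ ((1:ℕ) + 1) (deriv C) := by norm_num; exact_mod_cast hC2'
    exact (contDiff_succ_iff_deriv.mp h2).2.2
  have dC : Differentiable ℝ C := hC.differentiable (by norm_num)
  have dC1 : Differentiable ℝ (deriv C) := hC2'.differentiable (by norm_num)
  have dC2 : Differentiable ℝ (deriv (deriv C)) := hC1'.differentiable (by norm_num)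
  -- first derivative of ψ, as a function
  have hψd : ∀ s, HasDerivAt ψ
      ((c * deriv (deriv C) s * C s - c * deriv C s * deriv C s) / C s ^ 2) s := by
    intro s
    rw [hψ]
    exact ((dC1 s).hasDerivAt.const_mul c).div (dC s).hasDerivAt (hC0 s)
  have hψ'eq : deriv ψ = fun s =>
      (c * deriv (deriv C) s * C s - c * deriv C s * deriv C s) / C s ^ 2 :=
    funext fun s => (hψd s).deriv
  intro p
  set t := p 0 with htdef
  set Cv := C t
  set C1 := deriv C t
  set C2 := deriv (deriv C) t
  set C3 := deriv (deriv (deriv C)) t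
  -- values of deriv ψ and deriv (deriv ψ) at t
  have hψ1 : deriv ψ t = (c * C2 * Cv - c * C1 * C1) / Cv ^ 2 := (hψd t).deriv
  have hψ2 : deriv (deriv ψ) t =
      ((c * C3 * Cv + c * C2 * C1 - (c * C2 * C1 + c * C1 * C2)) * Cv ^ 2
        - (c * C2 * Cv - c * C1 * C1) * ((2 : ℕ) * Cv ^ 1 * C1)) / (Cv ^ 2) ^ 2 := by
    rw [hψ'eq]
    have hnum : HasDerivAt (fun s => c * deriv (deriv C) s * C s - c * deriv C s * deriv C s)
        (c * C3 * Cv + c * C2 * C1 - (c * C2 * C1 + c * C1 * C2)) t := by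
      have h1 : HasDerivAt (fun s => c * deriv (deriv C) s * C s) (c * C3 * Cv + c * C2 * C1) t :=
        ((dC2 t).hasDerivAt.const_mul c).mul (dC t).hasDerivAt
      have h2 : HasDerivAt (fun s => c * deriv C s * deriv C s) (c * C2 * C1 + c * C1 * C2) t :=
        ((dC1 t).hasDerivAt.const_mul c).mul (dC1 t).hasDerivAt
      exact h1.sub h2
    have hden : HasDerivAt (fun s => C s ^ 2) ((2 : ℕ) * Cv ^ 1 * C1) t :=
      (dC t).hasDerivAt.pow 2
    exact (hnum.div hden (pow_ne_zero 2 (hC0 t))).deriv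
  -- HasFDerivAt machinery on ℝ⁴
  have hproj : ∀ (i : Fin 4), HasFDerivAt (fun q : Fin 4 → ℝ => q i)
      (ContinuousLinearMap.proj i : (Fin 4 → ℝ) →L[ℝ] ℝ) p := fun i => hasFDerivAt_apply i p
  -- exponentials
  have hexp0 : HasFDerivAt (fun q : Fin 4 → ℝ => Real.exp (-(q 0) / c))
      ((Real.exp (-t / c) * (-1 / c)) • (ContinuousLinearMap.proj 0 : (Fin 4 → ℝ) →L[ℝ] ℝ)) p := by
    have hg : HasDerivAt (fun s : ℝ => Real.exp (-s / c)) (Real.exp (-t / c) * (-1 / c)) t := by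
      have : HasDerivAt (fun s : ℝ => -s / c) (-1 / c) t := by
        simpa using ((hasDerivAt_id t).neg.div_const c)
      exact this.exp
    exact hg.comp_hasFDerivAt p (hproj 0)
  have hexp1 : HasFDerivAt (fun q : Fin 4 → ℝ => Real.exp (-(α₁ * q 0) / c))
      ((Real.exp (-(α₁ * t) / c) * (-α₁ / c)) • (ContinuousLinearMap.proj 0 : (Fin 4 → ℝ) →L[ℝ] ℝ)) p := by
    have hg : HasDerivAt (fun s : ℝ => Real.exp (-(α₁ * s) / c))
        (Real.exp (-(α₁ * t) / c) * (-α₁ / c)) t := by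
      have : HasDerivAt (fun s : ℝ => -(α₁ * s) / c) (-α₁ / c) t := by
        simpa using (((hasDerivAt_id t).const_mul α₁).neg.div_const c)
      exact this.exp
    exact hg.comp_hasFDerivAt p (hproj 0)
  -- the inner map W and its derivative
  set proj : Fin 4 → ((Fin 4 → ℝ) →L[ℝ] ℝ) := fun i => ContinuousLinearMap.proj i with hprojdef
  set D0 : (Fin 4 → ℝ) →L[ℝ] ℝ :=
    p 1 • ((Real.exp (-t / c) * (-1 / c)) • proj 0) + Real.exp (-t / c) • proj 1 with hD0
  set D1 : (Fin 4 → ℝ) →L[ℝ] ℝ :=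
    p 2 • ((Real.exp (-(α₁ * t) / c) * (-α₁ / c)) • proj 0) + Real.exp (-(α₁ * t) / c) • proj 2 with hD1
  set D2 : (Fin 4 → ℝ) →L[ℝ] ℝ := proj 3 with hD2
  set W : (Fin 4 → ℝ) → (Fin 3 → ℝ) := fun q =>
    ![q 1 * Real.exp (-(q 0) / c), q 2 * Real.exp (-(α₁ * q 0) / c), q 3] with hWdef
  set Dw : (Fin 4 → ℝ) →L[ℝ] (Fin 3 → ℝ) := ContinuousLinearMap.pi ![D0, D1, D2] with hDw
  have hW : HasFDerivAt W Dw p := by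
    rw [hasFDerivAt_pi']
    intro i
    rw [hDw, ContinuousLinearMap.proj_pi]
    fin_cases i
    · exact (hproj 1).mul hexp0
    · exact (hproj 2).mul hexp1
    · simpa [hWdef, hD2, hprojdef] using hproj 3
  set DU : (Fin 3 → ℝ) →L[ℝ] ℝ := fderiv ℝ U (W p) with hDU
  have hUW : HasFDerivAt (fun q => U (W q)) (DU.comp Dw) p :=
    (hU (W p)).hasFDerivAt.comp p hW
  -- scalar prefactors
  set ad : ℝ := ((c * C3 - (α₁ + 1) * C2) * (c * Cv ^ 3)
      - (c * C2 - (α₁ + 1) * C1) * (c * ((3 : ℕ) * Cv ^ 2 * C1))) / (c * Cv ^ 3) ^ 2 with had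
  set bd : ℝ := -((2 : ℕ) * Cv ^ 1 * C1) / (Cv ^ 2) ^ 2 with hbd
  have hA : HasFDerivAt (fun q : Fin 4 → ℝ =>
      (c * deriv (deriv C) (q 0) - (α₁ + 1) * deriv C (q 0)) / (c * (C (q 0)) ^ 3))
      (ad • proj 0) p := by
    have h : HasDerivAt (fun s => (c * deriv (deriv C) s - (α₁ + 1) * deriv C s) / (c * C s ^ 3))
        ad t := by
      have hnum : HasDerivAt (fun s => c * deriv (deriv C) s - (α₁ + 1) * deriv C s)
          (c * C3 - (α₁ + 1) * C2) t :=
        ((dC2 t).hasDerivAt.const_mul c).sub ((dC1 t).hasDerivAt.const_mul (α₁ + 1))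
      have hden : HasDerivAt (fun s => c * C s ^ 3) (c * ((3 : ℕ) * Cv ^ 2 * C1)) t :=
        ((dC t).hasDerivAt.pow 3).const_mul c
      have hden0 : c * Cv ^ 3 ≠ 0 := mul_ne_zero hc (pow_ne_zero 3 (hC0 t))
      exact hnum.div hden hden0
    exact h.comp_hasFDerivAt p (hproj 0)
  have hB : HasFDerivAt (fun q : Fin 4 → ℝ => ((C (q 0)) ^ 2)⁻¹) (bd • proj 0) p := by
    have h : HasDerivAt (fun s => (C s ^ 2)⁻¹) bd t :=
      ((dC t).hasDerivAt.pow 2).inv (pow_ne_zero 2 (hC0 t))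
    have h2 := h.comp_hasFDerivAt p (hproj 0)
    exact h2
  -- derivative of V
  set L : (Fin 4 → ℝ) →L[ℝ] ℝ :=
    ad • proj 0 + ((Cv ^ 2)⁻¹ • (DU.comp Dw) + U (W p) • (bd • proj 0)) with hL
  have hVf : HasFDerivAt V L p := by
    rw [hV]
    exact hA.add (hB.mul hUW)
  have hfd : fderiv ℝ V p = L := hVf.fderiv
  -- evaluate the partial derivatives
  have hk : ∀ μ : Fin 4, pd μ V p = L (Pi.single μ 1) := by
    intro μ; rw [pd, hfd]
  -- the directional cancellation in the U argument
  set k0 : Fin 3 → ℝ := Dw (Pi.single 0 1) with hk0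
  set k1 : Fin 3 → ℝ := Dw (Pi.single 1 1) with hk1
  set k2 : Fin 3 → ℝ := Dw (Pi.single 2 1) with hk2
  have hzero : c • k0 + p 1 • k1 + (α₁ * p 2) • k2 = 0 := by
    funext i
    fin_cases i <;>
      simp [hk0, hk1, hk2, hDw, hD0, hD1, hD2, hprojdef, ContinuousLinearMap.pi_apply,
        Pi.single_eq_same, Pi.single_eq_of_ne] <;>
      field_simp <;> ring
  have hDUzero : c * DU k0 + p 1 * DU k1 + α₁ * p 2 * DU k2 = 0 := by
    have : c * DU k0 + p 1 * DU k1 + α₁ * p 2 * DU k2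
        = DU (c • k0 + p 1 • k1 + (α₁ * p 2) • k2) := by
      simp [map_add, map_smul]
    rw [this, hzero, map_zero]
  -- evaluate L at the basis vectors
  have e0 : pd 0 V p = ad + ((Cv ^ 2)⁻¹ * DU k0 + U (W p) * bd) := by
    rw [hk 0, hL]
    simp [hk0, hprojdef, Pi.single_eq_same]
  have e1 : pd 1 V p = (Cv ^ 2)⁻¹ * DU k1 := by
    rw [hk 1, hL]
    simp [hk1, hprojdef, Pi.single_eq_same, Pi.single_eq_of_ne]
  have e2 : pd 2 V p = (Cv ^ 2)⁻¹ * DU k2 := by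
    rw [hk 2, hL]
    simp [hk2, hprojdef, Pi.single_eq_same, Pi.single_eq_of_ne]
  -- now the scalar identity
  have hVp : V p = (c * C2 - (α₁ + 1) * C1) / (c * Cv ^ 3) + (Cv ^ 2)⁻¹ * U (W p) := by
    rw [hV]
  have hΔ : Δψ t = -(Cv ^ 2)⁻¹ *
      (deriv (deriv ψ) t + (2 * C1 / Cv - (1 + α₁) / c) * deriv ψ t) := by rw [hΔψ]
  have hψt : ψ t = c * C1 / Cv := by rw [hψ]
  rw [e0, e1, e2, hVp, hΔ, hψt, hψ1, hψ2]
  have hCv : Cv ≠ 0 := hC0 t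
  have hexpand : c * (ad + ((Cv ^ 2)⁻¹ * DU k0 + U (W p) * bd))
      + p 1 * ((Cv ^ 2)⁻¹ * DU k1) + α₁ * p 2 * ((Cv ^ 2)⁻¹ * DU k2)
      = c * ad + c * U (W p) * bd
        + (Cv ^ 2)⁻¹ * (c * DU k0 + p 1 * DU k1 + α₁ * p 2 * DU k2) := by ring
  rw [hexpand, hDUzero, mul_zero, add_zero, had, hbd]
  field_simp
  ring
end
end

section
/- Let c, α₁, α, β, γ be real constants with c ≠ 0 and α₁ ≠ 0, let C : ℝ → ℝ be three times differentiable with C(t) ≠ 0 for all t, and let U : ℝ³ → ℝ be differentiable. On ℝ⁴ with coordinates (t,x,y,z), consider the Bianchi I metric diag(−C², C²e^{−2t/c}, C²e^{−2α₁t/c}, C²), the conformal Killing vector ξ = (c, x + α, α₁y + β, γ) (i.e. X₁ + α∂_x + β∂_y + γ∂_z) with conformal factor ψ(t) = c·C′(t)/C(t), and the potential V(t,x,y,z) = (c·C″(t) − (α₁+1)·C′(t))/(c·C(t)³) + C(t)^{−2}·U((x+α)·e^{−t/c}, (y + β/α₁)·e^{−α₁t/c}, z − (γ/c)·t). Then the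 symmetry constraint holds identically: for all (t,x,y,z), c·∂_tV + (x+α)·∂_xV + (α₁y+β)·∂_yV + γ·∂_zV + 2ψ·V + Δψ = 0, where Δψ(t) = −C(t)^{−2}·[ψ″(t) + (2C′(t)/C(t) − (1+α₁)/c)·ψ′(t)]. -/
noncomputable section

set_option maxHeartbeats 2000000 in
/-- for the Bianchi I metric `diag(−C², C²e^{−2t/c}, C²e^{−2α₁t/c}, C²)`,
the CKV `ξ = X₁ + α∂_x + β∂_y + γ∂_z = (c, x+α, α₁y+β, γ)` with conformal factor
`ψ = cC′/C` and the potential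
`V = (cC″ − (α₁+1)C′)/(cC³) + C^{−2}·U((x+α)e^{−t/c}, (y+β/α₁)e^{−α₁t/c}, z−(γ/c)t)`,
the Lie/Noether symmetry constraint `ξ^ν ∂_ν V + 2ψV + Δψ = 0` holds. -/
theorem bianchiI_X1_plus_KVs_potential_constraint (c α₁ α β γ : ℝ)
    (hc : c ≠ 0) (hα₁ : α₁ ≠ 0)
    (C : ℝ → ℝ) (hC : ContDiff ℝ 3 C) (hC0 : ∀ t, C t ≠ 0)
    (U : (Fin 3 → ℝ) → ℝ) (hU : Differentiable ℝ U)
    (ψ : ℝ → ℝ) (hψ : ψ = fun t => c * deriv C t / C t)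
    (Δψ : ℝ → ℝ)
    (hΔψ : Δψ = fun t => -((C t) ^ 2)⁻¹ *
      (deriv (deriv ψ) t + (2 * deriv C t / C t - (1 + α₁) / c) * deriv ψ t))
    (V : (Fin 4 → ℝ) → ℝ)
    (hV : V = fun p =>
      (c * deriv (deriv C) (p 0) - (α₁ + 1) * deriv C (p 0)) / (c * (C (p 0)) ^ 3)
      + ((C (p 0)) ^ 2)⁻¹ *
          U ![(p 1 + α) * Real.exp (-(p 0) / c),
              (p 2 + β / α₁) * Real.exp (-(α₁ * p 0) / c),
              p 3 - (γ / c) * p 0]) :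
    ∀ p : Fin 4 → ℝ,
      c * pd 0 V p + (p 1 + α) * pd 1 V p + (α₁ * p 2 + β) * pd 2 V p + γ * pd 3 V p
        + 2 * ψ (p 0) * V p + Δψ (p 0) = 0 := by
  subst hψ hΔψ hV
  intro p
  -- differentiability of C and its derivatives
  have h3 : ContDiff ℝ (2 + 1) C := by norm_num at hC ⊢; exact hC
  have hC' : ContDiff ℝ 2 (deriv C) := (contDiff_succ_iff_deriv.mp h3).2.2
  have h2 : ContDiff ℝ (1 + 1) (deriv C) := by norm_num at hC' ⊢; exact hC'
  have hC'' : ContDiff ℝ 1 (deriv (deriv C)) := (contDiff_succ_iff_deriv.mp h2).2.2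
  have hd1 : ∀ s : ℝ, HasDerivAt C (deriv C s) s :=
    fun s => (hC.differentiable (by norm_num) s).hasDerivAt
  have hd2 : ∀ s : ℝ, HasDerivAt (deriv C) (deriv (deriv C) s) s :=
    fun s => (hC'.differentiable (by norm_num) s).hasDerivAt
  have hd3 : ∀ s : ℝ, HasDerivAt (deriv (deriv C)) (deriv (deriv (deriv C)) s) s :=
    fun s => (hC''.differentiable (by norm_num) s).hasDerivAt
  -- first derivative of ψ as a function
  have hψd : ∀ s : ℝ, HasDerivAt (fun u => c * deriv C u / C u)
      ((c * deriv (deriv C) s * C s - c * deriv C s * deriv C s) / C s ^ 2) s :=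
    fun s => ((hd2 s).const_mul c).div (hd1 s) (hC0 s)
  have hψe : deriv (fun u => c * deriv C u / C u)
      = fun s => (c * deriv (deriv C) s * C s - c * deriv C s * deriv C s) / C s ^ 2 := by
    funext s; exact (hψd s).deriv
  -- second derivative of ψ at p 0
  have hψ2 := ((((hd3 (p 0)).const_mul c).mul (hd1 (p 0))).sub
      (((hd2 (p 0)).const_mul c).mul (hd2 (p 0)))).div ((hd1 (p 0)).pow 2)
      (pow_ne_zero 2 (hC0 (p 0)))
  have hψ2e := hψ2.deriv
  -- projections
  have hP : ∀ i : Fin 4, HasFDerivAt (fun q : Fin 4 → ℝ => q i)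
      (ContinuousLinearMap.proj i : (Fin 4 → ℝ) →L[ℝ] ℝ) p := fun i => by
    exact hasFDerivAt_apply i p
  -- components of w
  have hw0 := ((hP 1).add_const α).mul
    ((((hasDerivAt_id (p 0)).neg.div_const c).exp).comp_hasFDerivAt p (hP 0))
  have hw1 := ((hP 2).add_const (β / α₁)).mul
    (((((hasDerivAt_id (p 0)).const_mul α₁).neg.div_const c).exp).comp_hasFDerivAt p (hP 0))
  have hw2 := (hP 3).sub ((hP 0).const_mul (γ / c))
  -- the inner map w and its derivative
  set W : Fin 3 → ℝ := ![(p 1 + α) * Real.exp (-(p 0) / c),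
      (p 2 + β / α₁) * Real.exp (-(α₁ * p 0) / c), p 3 - γ / c * p 0] with hW
  set D0 : (Fin 4 → ℝ) →L[ℝ] ℝ :=
      (p 1 + α) • ((Real.exp (-p 0 / c) * (-1 / c)) • ContinuousLinearMap.proj 0)
        + Real.exp (-(p 0) / c) • ContinuousLinearMap.proj 1 with hD0
  set D1 : (Fin 4 → ℝ) →L[ℝ] ℝ :=
      (p 2 + β / α₁) • ((Real.exp (-(α₁ * p 0) / c) * (-(α₁ * 1) / c)) • ContinuousLinearMap.proj 0)
        + Real.exp (-(α₁ * p 0) / c) • ContinuousLinearMap.proj 2 with hD1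
  set D2 : (Fin 4 → ℝ) →L[ℝ] ℝ :=
      ContinuousLinearMap.proj 3 - (γ / c) • ContinuousLinearMap.proj 0 with hD2
  have hDw : HasFDerivAt (fun q : Fin 4 → ℝ => ![(q 1 + α) * Real.exp (-(q 0) / c),
      (q 2 + β / α₁) * Real.exp (-(α₁ * q 0) / c), q 3 - γ / c * q 0])
      (ContinuousLinearMap.pi ![D0, D1, D2]) p := by
    apply hasFDerivAt_pi''
    intro i
    fin_cases i <;>
      simp only [ContinuousLinearMap.proj_pi, Matrix.cons_val_zero, Matrix.cons_val_one,
        Matrix.head_cons, Matrix.cons_val_two, Matrix.tail_cons, Fin.isValue]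
    · exact hw0
    · exact hw1
    · exact hw2
  -- derivative of U ∘ w
  have hUw : HasFDerivAt (fun q : Fin 4 → ℝ => U ![(q 1 + α) * Real.exp (-(q 0) / c),
      (q 2 + β / α₁) * Real.exp (-(α₁ * q 0) / c), q 3 - γ / c * q 0])
      ((fderiv ℝ U W).comp (ContinuousLinearMap.pi ![D0, D1, D2])) p :=
    ((hU W).hasFDerivAt).comp p hDw
  -- derivative of the F-part
  have hF := (((hd3 (p 0)).const_mul c).sub ((hd2 (p 0)).const_mul (α₁ + 1))).div
      (((hd1 (p 0)).pow 3).const_mul c) (mul_ne_zero hc (pow_ne_zero 3 (hC0 (p 0))))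
  have hFp := hF.comp_hasFDerivAt p (hP 0)
  -- derivative of the G-part
  have hG := ((hd1 (p 0)).pow 2).inv (pow_ne_zero 2 (hC0 (p 0)))
  have hGp := hG.comp_hasFDerivAt p (hP 0)
  -- derivative of V
  have hVd := hFp.add (hGp.mul hUw)
  have hVd' : HasFDerivAt (fun q : Fin 4 → ℝ =>
      (c * deriv (deriv C) (q 0) - (α₁ + 1) * deriv C (q 0)) / (c * C (q 0) ^ 3)
      + (C (q 0) ^ 2)⁻¹ * U ![(q 1 + α) * Real.exp (-(q 0) / c),
          (q 2 + β / α₁) * Real.exp (-(α₁ * q 0) / c), q 3 - γ / c * q 0]) _ p := hVd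
  simp only [pd]
  rw [hVd'.fderiv]
  have hexp : ∀ v : Fin 4 → ℝ, (fderiv ℝ U W) ((ContinuousLinearMap.pi ![D0, D1, D2]) v)
      = D0 v * (fderiv ℝ U W) (fun j => if 0 = j then 1 else 0)
      + D1 v * (fderiv ℝ U W) (fun j => if 1 = j then 1 else 0)
      + D2 v * (fderiv ℝ U W) (fun j => if 2 = j then 1 else 0) := by
    intro v
    have h := LinearMap.pi_apply_eq_sum_univ
      ((fderiv ℝ U W).toLinearMap) ((ContinuousLinearMap.pi ![D0, D1, D2]) v)
    simpa [Fin.sum_univ_three, ContinuousLinearMap.pi_apply] using h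
  simp only [ContinuousLinearMap.add_apply, ContinuousLinearMap.comp_apply,
    ContinuousLinearMap.smul_apply, ContinuousLinearMap.sub_apply,
    ContinuousLinearMap.proj_apply, smul_eq_mul, Function.comp_apply, hexp]
  simp only [hD0, hD1, hD2, ContinuousLinearMap.add_apply, ContinuousLinearMap.smul_apply,
    ContinuousLinearMap.sub_apply, ContinuousLinearMap.proj_apply, smul_eq_mul]
  simp [Pi.single_apply]
  simp only [hψe]
  rw [show deriv (fun s => (c * deriv (deriv C) s * C s - c * deriv C s * deriv C s) / C s ^ 2) (p 0) = _ from hψ2e]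
  simp only [Pi.mul_apply, Pi.sub_apply, Pi.pow_apply]
  push_cast
  have hCp := hC0 (p 0)
  field_simp
  ring
end
end

section
/- Let m, λ be real constants with m ≠ 0, let A : ℝ → ℝ be three times differentiable with A(t) ≠ 0 for all t, and let U : ℝ³ → ℝ be differentiable. On ℝ⁴ with coordinates (t,x,y,z), consider the Bianchi III metric diag(−A²e^{mλt}, A²e^{mλt}, A²e^{m(λ−1)t}, A²e^{−2x}), the conformal Killing vector ξ = (2/m, 0, y, λz) with conformal factor ψ(t) = (2/m)·A′(t)/A(t) + λ, and the potential V(t,x,y,z) = (e^{−mλt}/A(t)²)·U(x, y·e^{−mt/2}, z·e^{−mλt/2}) + e^{−mλt}·(m(λ−1)·A′(t) + 2A″(t))/(2A(t)³). Then the Lie/Noether symmetry constraint of the Klein–Gordon equation holds identically: for all (t,x,y,z), (2/m)·∂_tV + y·∂_yV + λz·∂_zV + 2ψ·V + Δψ = 0, where Δψ(t) = −(e^{−mλt}/A(t)²)·[ψ″(t) + (2A′(t)/A(t) + m(λ−1)/2)·ψ′(t)] is the Laplace–Beltrami operator of the metric applied to ψ. -/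
noncomputable section

set_option maxHeartbeats 2000000

lemma pd_eq {f : (Fin 4 → ℝ) → ℝ} {p : Fin 4 → ℝ} (μ : Fin 4)
    (hf : DifferentiableAt ℝ f p) :
    pd μ f p = deriv (fun s => f (Function.update p μ s)) (p μ) := by
  have hrw : (fun s : ℝ => Function.update p μ s)
      = fun s => p + (s - p μ) • (Pi.single μ 1 : Fin 4 → ℝ) := by
    funext s i
    rcases eq_or_ne i μ with h | h
    · subst h; simp
    · simp [Function.update_apply, h, Pi.single_apply]
  have hl : HasDerivAt (fun s : ℝ => Function.update p μ s) (Pi.single μ 1) (p μ) := by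
    rw [hrw]
    have h1 : HasDerivAt (fun s : ℝ => s - p μ) 1 (p μ) := (hasDerivAt_id _).sub_const _
    simpa using (h1.smul_const (Pi.single μ (1:ℝ))).const_add p
  have hfp : HasFDerivAt f (fderiv ℝ f p) (Function.update p μ (p μ)) := by
    rw [Function.update_eq_self]; exact hf.hasFDerivAt
  exact ((hfp.comp_hasDerivAt (p μ) hl).deriv).symm

/-- STATEMENT: for the Bianchi III metric, the CKV `ξ = (2/m)∂_t + y∂_y + λz∂_z` with
conformal factor `ψ = (2/m)A′/A + λ` and the potential
`V = (e^{−mλt}/A²)·U(x, ye^{−mt/2}, ze^{−mλt/2}) + e^{−mλt}(m(λ−1)A′ + 2A″)/(2A³)`,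
the Lie/Noether symmetry constraint `ξ^ν ∂_ν V + 2ψV + Δψ = 0` of the Klein-Gordon
equation holds. -/
theorem bianchiIII_X3_potential_constraint (m lam : ℝ) (hm : m ≠ 0)
    (A : ℝ → ℝ) (hA : ContDiff ℝ 3 A) (hA0 : ∀ t, A t ≠ 0)
    (U : (Fin 3 → ℝ) → ℝ) (hU : Differentiable ℝ U)
    (ψ : ℝ → ℝ) (hψ : ψ = fun t => (2 / m) * deriv A t / A t + lam)
    (Δψ : ℝ → ℝ)
    (hΔψ : Δψ = fun t => -(Real.exp (-(m * lam * t)) / (A t) ^ 2) *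
      (deriv (deriv ψ) t + (2 * deriv A t / A t + m * (lam - 1) / 2) * deriv ψ t))
    (V : (Fin 4 → ℝ) → ℝ)
    (hV : V = fun p =>
      (Real.exp (-(m * lam * p 0)) / (A (p 0)) ^ 2) *
        U ![p 1, p 2 * Real.exp (-(m * p 0) / 2), p 3 * Real.exp (-(m * lam * p 0) / 2)]
      + Real.exp (-(m * lam * p 0)) *
          (m * (lam - 1) * deriv A (p 0) + 2 * deriv (deriv A) (p 0)) /
          (2 * (A (p 0)) ^ 3)) :
    ∀ p : Fin 4 → ℝ,
      (2 / m) * pd 0 V p + p 2 * pd 2 V p + lam * p 3 * pd 3 V p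
        + 2 * ψ (p 0) * V p + Δψ (p 0) = 0 := by
  -- differentiability of A and its derivatives
  have h3 : ContDiff ℝ ((2:ℕ)+1) A := by exact_mod_cast hA
  obtain ⟨hAd, h2⟩ := contDiff_succ_iff_deriv.mp h3
  have h2' : ContDiff ℝ ((1:ℕ)+1) (deriv A) := by exact_mod_cast h2.2
  obtain ⟨hBd, h1⟩ := contDiff_succ_iff_deriv.mp h2'
  have h1' : ContDiff ℝ ((0:ℕ)+1) (deriv (deriv A)) := by exact_mod_cast h1.2
  obtain ⟨hCd, _⟩ := contDiff_succ_iff_deriv.mp h1'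
  have hAt : ∀ s, HasDerivAt A (deriv A s) s := fun s => (hAd s).hasDerivAt
  have hBt : ∀ s, HasDerivAt (deriv A) (deriv (deriv A) s) s := fun s => (hBd s).hasDerivAt
  have hCt : ∀ s, HasDerivAt (deriv (deriv A)) (deriv (deriv (deriv A)) s) s :=
    fun s => (hCd s).hasDerivAt
  intro p
  subst hψ hΔψ hV
  -- exponential derivatives
  have he1 : ∀ s : ℝ, HasDerivAt (fun r : ℝ => Real.exp (-(m * lam * r)))
      (Real.exp (-(m * lam * s)) * -(m * lam)) s := by
    intro s
    have h : HasDerivAt (fun r : ℝ => -(m * lam * r)) (-(m * lam)) s := by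
      simpa using ((hasDerivAt_id s).const_mul (m * lam)).fun_neg
    exact h.exp
  have he2 : ∀ s : ℝ, HasDerivAt (fun r : ℝ => Real.exp (-(m * r) / 2))
      (Real.exp (-(m * s) / 2) * (-m / 2)) s := by
    intro s
    have h : HasDerivAt (fun r : ℝ => -(m * r) / 2) (-m / 2) s := by
      simpa using (((hasDerivAt_id s).const_mul m).neg.div_const 2)
    exact h.exp
  have he3 : ∀ s : ℝ, HasDerivAt (fun r : ℝ => Real.exp (-(m * lam * r) / 2))
      (Real.exp (-(m * lam * s) / 2) * (-(m * lam) / 2)) s := by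
    intro s
    have h : HasDerivAt (fun r : ℝ => -(m * lam * r) / 2) (-(m * lam) / 2) s := by
      simpa using (((hasDerivAt_id s).const_mul (m * lam)).neg.div_const 2)
    exact h.exp
  have hA2 : ∀ s, HasDerivAt (fun r => A r ^ 2) (2 * A s * deriv A s) s := by
    intro s
    have := (hAt s).pow 2
    norm_num at this
    exact this
  have hA3 : ∀ s, HasDerivAt (fun r => 2 * A r ^ 3) (6 * A s ^ 2 * deriv A s) s := by
    intro s
    have := ((hAt s).fun_pow 3).const_mul 2
    norm_num at this
    refine this.congr_deriv ?_
    ring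
  -- fderiv of U at the relevant point
  set t : ℝ := p 0 with htdef
  set c : Fin 3 → ℝ :=
    ![p 1, p 2 * Real.exp (-(m * t) / 2), p 3 * Real.exp (-(m * lam * t) / 2)] with hcdef
  have hUc : HasFDerivAt U (fderiv ℝ U c) c := (hU c).hasFDerivAt
  set Dc := fderiv ℝ U c with hDcdef
  set w2 : Fin 3 → ℝ := ![0, Real.exp (-(m * t) / 2), 0] with hw2def
  set w3 : Fin 3 → ℝ := ![0, 0, Real.exp (-(m * lam * t) / 2)] with hw3def
  set w0 : Fin 3 → ℝ :=
    ![0, p 2 * (Real.exp (-(m * t) / 2) * (-m / 2)),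
       p 3 * (Real.exp (-(m * lam * t) / 2) * (-(m * lam) / 2))] with hw0def
  -- differentiability of V at p
  have hgd : DifferentiableAt ℝ (fun q : Fin 4 → ℝ =>
      (![q 1, q 2 * Real.exp (-(m * q 0) / 2), q 3 * Real.exp (-(m * lam * q 0) / 2)]
        : Fin 3 → ℝ)) p := by
    rw [differentiableAt_pi]
    intro i
    fin_cases i <;> simp <;> fun_prop
  have hVd : DifferentiableAt ℝ (fun q : Fin 4 → ℝ =>
      Real.exp (-(m * lam * q 0)) / A (q 0) ^ 2 *
        U ![q 1, q 2 * Real.exp (-(m * q 0) / 2), q 3 * Real.exp (-(m * lam * q 0) / 2)]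
      + Real.exp (-(m * lam * q 0)) *
          (m * (lam - 1) * deriv A (q 0) + 2 * deriv (deriv A) (q 0)) /
          (2 * A (q 0) ^ 3)) p := by
    apply DifferentiableAt.add
    · apply DifferentiableAt.mul
      · simp only [div_eq_mul_inv]
        apply DifferentiableAt.mul
        · fun_prop
        · exact DifferentiableAt.inv (by fun_prop) (pow_ne_zero 2 (hA0 _))
      · exact DifferentiableAt.comp p (hU _) hgd
    · simp only [div_eq_mul_inv]
      apply DifferentiableAt.mul
      · fun_prop
      · refine DifferentiableAt.inv (by fun_prop) ?_
        have := hA0 (p 0)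
        positivity
  -- slice in direction 0
  have hs0 : (fun s => (fun q : Fin 4 → ℝ =>
      Real.exp (-(m * lam * q 0)) / A (q 0) ^ 2 *
        U ![q 1, q 2 * Real.exp (-(m * q 0) / 2), q 3 * Real.exp (-(m * lam * q 0) / 2)]
      + Real.exp (-(m * lam * q 0)) *
          (m * (lam - 1) * deriv A (q 0) + 2 * deriv (deriv A) (q 0)) /
          (2 * A (q 0) ^ 3)) (Function.update p 0 s))
      = fun s =>
      Real.exp (-(m * lam * s)) / A s ^ 2 *
        U ![p 1, p 2 * Real.exp (-(m * s) / 2), p 3 * Real.exp (-(m * lam * s) / 2)]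
      + Real.exp (-(m * lam * s)) *
          (m * (lam - 1) * deriv A s + 2 * deriv (deriv A) s) / (2 * A s ^ 3) := by
    funext s
    simp [Function.update_apply, show (1:Fin 4) ≠ 0 from by decide,
      show (2:Fin 4) ≠ 0 from by decide, show (3:Fin 4) ≠ 0 from by decide]
  -- inner curve for slice 0
  have hg0 : HasDerivAt (fun s : ℝ =>
      (![p 1, p 2 * Real.exp (-(m * s) / 2), p 3 * Real.exp (-(m * lam * s) / 2)]
        : Fin 3 → ℝ)) w0 t := by
    rw [hasDerivAt_pi]
    intro i
    fin_cases i
    · simpa [hw0def] using hasDerivAt_const t (p 1)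
    · simpa [hw0def] using (he2 t).const_mul (p 2)
    · simpa [hw0def] using (he3 t).const_mul (p 3)
  have hUg0 : HasDerivAt (fun s : ℝ =>
      U ![p 1, p 2 * Real.exp (-(m * s) / 2), p 3 * Real.exp (-(m * lam * s) / 2)]) (Dc w0) t :=
    hUc.comp_hasDerivAt t hg0
  -- slice-0 derivative
  have hf0 : HasDerivAt (fun s =>
      Real.exp (-(m * lam * s)) / A s ^ 2 *
        U ![p 1, p 2 * Real.exp (-(m * s) / 2), p 3 * Real.exp (-(m * lam * s) / 2)]
      + Real.exp (-(m * lam * s)) *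
          (m * (lam - 1) * deriv A s + 2 * deriv (deriv A) s) / (2 * A s ^ 3))
      ((Real.exp (-(m * lam * t)) * -(m * lam) * A t ^ 2
          - Real.exp (-(m * lam * t)) * (2 * A t * deriv A t)) / (A t ^ 2) ^ 2 * U c
        + Real.exp (-(m * lam * t)) / A t ^ 2 * Dc w0
        + ((Real.exp (-(m * lam * t)) * -(m * lam) *
              (m * (lam - 1) * deriv A t + 2 * deriv (deriv A) t)
            + Real.exp (-(m * lam * t)) *
              (m * (lam - 1) * deriv (deriv A) t + 2 * deriv (deriv (deriv A)) t))
            * (2 * A t ^ 3)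
          - Real.exp (-(m * lam * t)) *
              (m * (lam - 1) * deriv A t + 2 * deriv (deriv A) t)
            * (6 * A t ^ 2 * deriv A t)) / (2 * A t ^ 3) ^ 2) t := by
    have ha := (he1 t).fun_div (hA2 t) (pow_ne_zero 2 (hA0 t))
    have h1 := ha.fun_mul hUg0
    have hnum : HasDerivAt (fun s =>
        Real.exp (-(m * lam * s)) * (m * (lam - 1) * deriv A s + 2 * deriv (deriv A) s))
        (Real.exp (-(m * lam * t)) * -(m * lam) *
            (m * (lam - 1) * deriv A t + 2 * deriv (deriv A) t)
          + Real.exp (-(m * lam * t)) *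
            (m * (lam - 1) * deriv (deriv A) t + 2 * deriv (deriv (deriv A)) t)) t := by
      have := (he1 t).fun_mul (((hBt t).const_mul (m * (lam - 1))).fun_add ((hCt t).const_mul 2))
      convert this using 1 <;> ring
    have hden0 : (2 : ℝ) * A t ^ 3 ≠ 0 := by
      have := hA0 t; positivity
    have h2 := hnum.fun_div (hA3 t) hden0
    convert h1.fun_add h2 using 1 <;> ring
  have hpd0 : pd 0 (fun q : Fin 4 → ℝ =>
      Real.exp (-(m * lam * q 0)) / A (q 0) ^ 2 *
        U ![q 1, q 2 * Real.exp (-(m * q 0) / 2), q 3 * Real.exp (-(m * lam * q 0) / 2)]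
      + Real.exp (-(m * lam * q 0)) *
          (m * (lam - 1) * deriv A (q 0) + 2 * deriv (deriv A) (q 0)) /
          (2 * A (q 0) ^ 3)) p
      = (Real.exp (-(m * lam * t)) * -(m * lam) * A t ^ 2
          - Real.exp (-(m * lam * t)) * (2 * A t * deriv A t)) / (A t ^ 2) ^ 2 * U c
        + Real.exp (-(m * lam * t)) / A t ^ 2 * Dc w0
        + ((Real.exp (-(m * lam * t)) * -(m * lam) *
              (m * (lam - 1) * deriv A t + 2 * deriv (deriv A) t)
            + Real.exp (-(m * lam * t)) *
              (m * (lam - 1) * deriv (deriv A) t + 2 * deriv (deriv (deriv A)) t))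
            * (2 * A t ^ 3)
          - Real.exp (-(m * lam * t)) *
              (m * (lam - 1) * deriv A t + 2 * deriv (deriv A) t)
            * (6 * A t ^ 2 * deriv A t)) / (2 * A t ^ 3) ^ 2 := by
    rw [pd_eq 0 hVd, hs0]
    exact hf0.deriv
  -- slice in direction 2
  have hs2 : (fun s => (fun q : Fin 4 → ℝ =>
      Real.exp (-(m * lam * q 0)) / A (q 0) ^ 2 *
        U ![q 1, q 2 * Real.exp (-(m * q 0) / 2), q 3 * Real.exp (-(m * lam * q 0) / 2)]
      + Real.exp (-(m * lam * q 0)) *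
          (m * (lam - 1) * deriv A (q 0) + 2 * deriv (deriv A) (q 0)) /
          (2 * A (q 0) ^ 3)) (Function.update p 2 s))
      = fun s =>
      Real.exp (-(m * lam * t)) / A t ^ 2 *
        U ![p 1, s * Real.exp (-(m * t) / 2), p 3 * Real.exp (-(m * lam * t) / 2)]
      + Real.exp (-(m * lam * t)) *
          (m * (lam - 1) * deriv A t + 2 * deriv (deriv A) t) / (2 * A t ^ 3) := by
    funext s
    simp [Function.update_apply, show (0:Fin 4) ≠ 2 from by decide,
      show (1:Fin 4) ≠ 2 from by decide, show (3:Fin 4) ≠ 2 from by decide, htdef]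
  have hg2 : HasDerivAt (fun s : ℝ =>
      (![p 1, s * Real.exp (-(m * t) / 2), p 3 * Real.exp (-(m * lam * t) / 2)]
        : Fin 3 → ℝ)) w2 (p 2) := by
    rw [hasDerivAt_pi]
    intro i
    fin_cases i
    · simpa [hw2def] using hasDerivAt_const (p 2) (p 1)
    · simpa [hw2def] using (hasDerivAt_id (p 2)).mul_const (Real.exp (-(m * t) / 2))
    · simpa [hw2def] using hasDerivAt_const (p 2) (p 3 * Real.exp (-(m * lam * t) / 2))
  have hf2 : HasDerivAt (fun s =>
      Real.exp (-(m * lam * t)) / A t ^ 2 *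
        U ![p 1, s * Real.exp (-(m * t) / 2), p 3 * Real.exp (-(m * lam * t) / 2)]
      + Real.exp (-(m * lam * t)) *
          (m * (lam - 1) * deriv A t + 2 * deriv (deriv A) t) / (2 * A t ^ 3))
      (Real.exp (-(m * lam * t)) / A t ^ 2 * Dc w2) (p 2) := by
    have h := (hUc.comp_hasDerivAt (p 2) hg2).const_mul
      (Real.exp (-(m * lam * t)) / A t ^ 2)
    exact h.add_const _
  have hpd2 : pd 2 (fun q : Fin 4 → ℝ =>
      Real.exp (-(m * lam * q 0)) / A (q 0) ^ 2 *
        U ![q 1, q 2 * Real.exp (-(m * q 0) / 2), q 3 * Real.exp (-(m * lam * q 0) / 2)]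
      + Real.exp (-(m * lam * q 0)) *
          (m * (lam - 1) * deriv A (q 0) + 2 * deriv (deriv A) (q 0)) /
          (2 * A (q 0) ^ 3)) p
      = Real.exp (-(m * lam * t)) / A t ^ 2 * Dc w2 := by
    rw [pd_eq 2 hVd, hs2]
    exact hf2.deriv
  -- slice in direction 3
  have hs3 : (fun s => (fun q : Fin 4 → ℝ =>
      Real.exp (-(m * lam * q 0)) / A (q 0) ^ 2 *
        U ![q 1, q 2 * Real.exp (-(m * q 0) / 2), q 3 * Real.exp (-(m * lam * q 0) / 2)]
      + Real.exp (-(m * lam * q 0)) *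
          (m * (lam - 1) * deriv A (q 0) + 2 * deriv (deriv A) (q 0)) /
          (2 * A (q 0) ^ 3)) (Function.update p 3 s))
      = fun s =>
      Real.exp (-(m * lam * t)) / A t ^ 2 *
        U ![p 1, p 2 * Real.exp (-(m * t) / 2), s * Real.exp (-(m * lam * t) / 2)]
      + Real.exp (-(m * lam * t)) *
          (m * (lam - 1) * deriv A t + 2 * deriv (deriv A) t) / (2 * A t ^ 3) := by
    funext s
    simp [Function.update_apply, show (0:Fin 4) ≠ 3 from by decide,
      show (1:Fin 4) ≠ 3 from by decide, show (2:Fin 4) ≠ 3 from by decide, htdef]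
  have hg3 : HasDerivAt (fun s : ℝ =>
      (![p 1, p 2 * Real.exp (-(m * t) / 2), s * Real.exp (-(m * lam * t) / 2)]
        : Fin 3 → ℝ)) w3 (p 3) := by
    rw [hasDerivAt_pi]
    intro i
    fin_cases i
    · simpa [hw3def] using hasDerivAt_const (p 3) (p 1)
    · simpa [hw3def] using hasDerivAt_const (p 3) (p 2 * Real.exp (-(m * t) / 2))
    · simpa [hw3def] using (hasDerivAt_id (p 3)).mul_const (Real.exp (-(m * lam * t) / 2))
  have hf3 : HasDerivAt (fun s =>
      Real.exp (-(m * lam * t)) / A t ^ 2 *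
        U ![p 1, p 2 * Real.exp (-(m * t) / 2), s * Real.exp (-(m * lam * t) / 2)]
      + Real.exp (-(m * lam * t)) *
          (m * (lam - 1) * deriv A t + 2 * deriv (deriv A) t) / (2 * A t ^ 3))
      (Real.exp (-(m * lam * t)) / A t ^ 2 * Dc w3) (p 3) := by
    have h := (hUc.comp_hasDerivAt (p 3) hg3).const_mul
      (Real.exp (-(m * lam * t)) / A t ^ 2)
    exact h.add_const _
  have hpd3 : pd 3 (fun q : Fin 4 → ℝ =>
      Real.exp (-(m * lam * q 0)) / A (q 0) ^ 2 *
        U ![q 1, q 2 * Real.exp (-(m * q 0) / 2), q 3 * Real.exp (-(m * lam * q 0) / 2)]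
      + Real.exp (-(m * lam * q 0)) *
          (m * (lam - 1) * deriv A (q 0) + 2 * deriv (deriv A) (q 0)) /
          (2 * A (q 0) ^ 3)) p
      = Real.exp (-(m * lam * t)) / A t ^ 2 * Dc w3 := by
    rw [pd_eq 3 hVd, hs3]
    exact hf3.deriv
  -- derivative of ψ
  have hψ1 : ∀ s, HasDerivAt (fun r => 2 / m * deriv A r / A r + lam)
      ((2 / m * deriv (deriv A) s * A s - 2 / m * deriv A s * deriv A s) / A s ^ 2) s := by
    intro s
    have h := (((hBt s).const_mul (2 / m)).fun_div (hAt s) (hA0 s)).add_const lam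
    convert h using 1 <;> ring
  have hdψ : (deriv fun r => 2 / m * deriv A r / A r + lam)
      = fun s => (2 / m * deriv (deriv A) s * A s - 2 / m * deriv A s * deriv A s) / A s ^ 2 :=
    funext fun s => (hψ1 s).deriv
  have hψ2 : HasDerivAt
      (fun s => (2 / m * deriv (deriv A) s * A s - 2 / m * deriv A s * deriv A s) / A s ^ 2)
      (((2 / m * deriv (deriv (deriv A)) t * A t - 2 / m * deriv A t * deriv (deriv A) t)
          * A t ^ 2
        - (2 / m * deriv (deriv A) t * A t - 2 / m * deriv A t * deriv A t)
          * (2 * A t * deriv A t)) / (A t ^ 2) ^ 2) t := by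
    have hnum : HasDerivAt
        (fun s => 2 / m * deriv (deriv A) s * A s - 2 / m * deriv A s * deriv A s)
        (2 / m * deriv (deriv (deriv A)) t * A t - 2 / m * deriv A t * deriv (deriv A) t) t := by
      have h := (((hCt t).const_mul (2 / m)).fun_mul (hAt t)).fun_sub
        (((hBt t).const_mul (2 / m)).fun_mul (hBt t))
      exact h.congr_deriv (by ring)
    have h := hnum.fun_div (hA2 t) (pow_ne_zero 2 (hA0 t))
    convert h using 1 <;> ring
  -- decomposition of Dc w0
  have hw0dec : w0 = (p 2 * (-m / 2)) • w2 + (p 3 * (-(m * lam) / 2)) • w3 := by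
    funext i
    fin_cases i <;>
      simp [hw0def, hw2def, hw3def] <;> ring
  have hDw0 : Dc w0 = p 2 * (-m / 2) * Dc w2 + p 3 * (-(m * lam) / 2) * Dc w3 := by
    rw [hw0dec, map_add, map_smul, map_smul]
    simp [smul_eq_mul]
  -- assemble
  rw [hpd0, hpd2, hpd3]
  beta_reduce
  rw [← htdef, ← hcdef]
  rw [hdψ, hψ2.deriv, hDw0]
  have hAne := hA0 t
  have hEne := Real.exp_ne_zero (-(m * lam * t))
  field_simp
  ring
end
end
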